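/- Let k be a field of characteristic p > 0, let m > 0, set q = p^m, let f be an m-truncated group law over k, let R be a commutative k-algebra, and let ∂ = (∂_n)_{0 ≤ n < q} and ∂' = (∂'_n)_{0 ≤ n < q} be two f-iterative m-truncated HS-derivations on R. If ∂_{p^j} = ∂'_{p^j} for every j < m, then ∂_n = ∂'_n for every n < q. -/

import Mathlib

open Finset MvPolynomial


-- basics about Fin 2 finsupps
lemma fin2_decomp (dd : Fin 2 →₀ ℕ) :
    dd = Finsupp.single 0 (dd 0) + Finsupp.single 1 (dd 1) := by
  ext i
  fin_cases i <;> simp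

lemma mul_vanish {k : Type*} [CommRing k] {P Q : MvPolynomial (Fin 2) k} {s t : ℕ}
    (hP : ∀ x : Fin 2 →₀ ℕ, x 0 + x 1 < s → coeff x P = 0)
    (hQ : ∀ y : Fin 2 →₀ ℕ, y 0 + y 1 < t → coeff y Q = 0) :
    ∀ dd : Fin 2 →₀ ℕ, dd 0 + dd 1 < s + t → coeff dd (P * Q) = 0 := by
  intro dd hdd
  rw [coeff_mul]
  apply Finset.sum_eq_zero
  rintro ⟨x, y⟩ hxy
  rw [Finset.HasAntidiagonal.mem_antidiagonal] at hxy
  have h0 : x 0 + y 0 = dd 0 := by rw [← hxy]; simp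
  have h1 : x 1 + y 1 = dd 1 := by rw [← hxy]; simp
  by_cases hx : x 0 + x 1 < s
  · rw [hP x hx, zero_mul]
  · rw [hQ y (by omega), mul_zero]

lemma pow_vanish {k : Type*} [CommRing k] {P : MvPolynomial (Fin 2) k} {s : ℕ}
    (hP : ∀ x : Fin 2 →₀ ℕ, x 0 + x 1 < s → coeff x P = 0) :
    ∀ n : ℕ, ∀ dd : Fin 2 →₀ ℕ, dd 0 + dd 1 < n * s → coeff dd (P ^ n) = 0 := by
  intro n
  induction n with
  | zero => intro dd hdd; omega
  | succ n IH =>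
    intro dd hdd
    rw [pow_succ]
    exact mul_vanish IH hP dd (by rw [Nat.succ_mul] at hdd; omega)


lemma coeff_of_aevalX0 {k : Type*} [CommRing k] {f : MvPolynomial (Fin 2) k}
    (h : MvPolynomial.aeval ![(Polynomial.X : Polynomial k), 0] f = Polynomial.X) (a : ℕ) :
    coeff (Finsupp.single 0 a) f = if a = 1 then 1 else 0 := by
  have h2 := congrArg (fun P => Polynomial.coeff P a) h
  rw [aeval_def, eval₂_eq] at h2
  rw [Polynomial.finset_sum_coeff] at h2
  rw [Polynomial.coeff_X] at h2
  have hprod : ∀ dd : Fin 2 →₀ ℕ,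
      ∏ i ∈ dd.support, ![Polynomial.X, (0:Polynomial k)] i ^ dd i
        = Polynomial.X ^ dd 0 * 0 ^ dd 1 := by
    intro dd
    rw [show (∏ i ∈ dd.support, ![Polynomial.X, (0:Polynomial k)] i ^ dd i)
        = dd.prod (fun i e => ![Polynomial.X, (0:Polynomial k)] i ^ e) from rfl,
      Finsupp.prod_pow]
    simp [Fin.prod_univ_two]
  simp only [hprod] at h2
  have key : ∑ dd ∈ f.support,
      (algebraMap k (Polynomial k) (coeff dd f) * (Polynomial.X ^ dd 0 * 0 ^ dd 1)).coeff a
      = coeff (Finsupp.single 0 a) f := by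
    rw [Finset.sum_eq_single (Finsupp.single 0 a)]
    · by_cases hs : a = 0
      · subst hs
        simp [Finsupp.single_zero]
      · simp [Finsupp.single_apply, zero_pow, Polynomial.coeff_X_pow,
          Polynomial.coeff_C_mul, algebraMap_eq, hs]
    · intro dd _ hne
      by_cases h1 : dd 1 = 0
      · have : dd 0 ≠ a := by
          intro h0
          apply hne
          rw [fin2_decomp dd, h0, h1]
          simp
        rw [h1, pow_zero, mul_one, Polynomial.algebraMap_eq, Polynomial.coeff_C_mul,
          Polynomial.coeff_X_pow, if_neg (Ne.symm this), mul_zero]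
      · simp [zero_pow h1]
    · intro hns
      rw [notMem_support_iff] at hns
      simp [hns]
  rw [key] at h2
  rw [h2]
  simp [eq_comm]

lemma coeff_of_aeval0X {k : Type*} [CommRing k] {f : MvPolynomial (Fin 2) k}
    (h : MvPolynomial.aeval ![0, (Polynomial.X : Polynomial k)] f = Polynomial.X) (a : ℕ) :
    coeff (Finsupp.single 1 a) f = if a = 1 then 1 else 0 := by
  have h2 := congrArg (fun P => Polynomial.coeff P a) h
  rw [aeval_def, eval₂_eq] at h2
  rw [Polynomial.finset_sum_coeff] at h2
  rw [Polynomial.coeff_X] at h2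
  have hprod : ∀ dd : Fin 2 →₀ ℕ,
      ∏ i ∈ dd.support, ![(0:Polynomial k), Polynomial.X] i ^ dd i
        = (0:Polynomial k) ^ dd 0 * Polynomial.X ^ dd 1 := by
    intro dd
    rw [show (∏ i ∈ dd.support, ![(0:Polynomial k), Polynomial.X] i ^ dd i)
        = dd.prod (fun i e => ![(0:Polynomial k), Polynomial.X] i ^ e) from rfl,
      Finsupp.prod_pow]
    simp [Fin.prod_univ_two]
  simp only [hprod] at h2
  have key : ∑ dd ∈ f.support,
      (algebraMap k (Polynomial k) (coeff dd f) * ((0:Polynomial k) ^ dd 0 * Polynomial.X ^ dd 1)).coeff a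
      = coeff (Finsupp.single 1 a) f := by
    rw [Finset.sum_eq_single (Finsupp.single 1 a)]
    · by_cases hs : a = 0
      · subst hs
        simp [Finsupp.single_zero]
      · simp [Finsupp.single_apply, zero_pow, Polynomial.coeff_X_pow,
          Polynomial.coeff_C_mul, algebraMap_eq, hs]
    · intro dd _ hne
      by_cases h0 : dd 0 = 0
      · have : dd 1 ≠ a := by
          intro h1
          apply hne
          rw [fin2_decomp dd, h0, h1]
          simp
        rw [h0, pow_zero, one_mul, Polynomial.algebraMap_eq, Polynomial.coeff_C_mul,
          Polynomial.coeff_X_pow, if_neg (Ne.symm this), mul_zero]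
      · simp [zero_pow h0]
    · intro hns
      rw [notMem_support_iff] at hns
      simp [hns]
  rw [key] at h2
  rw [h2]
  simp [eq_comm]

lemma hcastC {k : Type*} [CommRing k] (c : ℕ) :
    ((c : ℕ) : MvPolynomial (Fin 2) k) = C (c : k) :=
  (map_natCast (C : k →+* MvPolynomial (Fin 2) k) c).symm

lemma coeff_addXY_pow {k : Type*} [CommRing k] (n a b : ℕ) (hab : a + b = n) :
    coeff (Finsupp.single 0 a + Finsupp.single 1 b)
      ((X 0 + X 1 : MvPolynomial (Fin 2) k) ^ n) = (n.choose a : k) := by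
  rw [add_pow, coeff_sum, Finset.sum_eq_single a]
  · rw [X_pow_eq_monomial, X_pow_eq_monomial, monomial_mul, one_mul, hcastC, mul_comm,
      coeff_C_mul, coeff_monomial, if_pos (by rw [show n - a = b from by omega]), mul_one]
  · intro j hj hne
    rw [X_pow_eq_monomial, X_pow_eq_monomial, monomial_mul, one_mul, hcastC, mul_comm,
      coeff_C_mul, coeff_monomial, if_neg, mul_zero]
    intro hmono
    have h0 := DFunLike.congr_fun hmono (0 : Fin 2)
    simp at h0
    exact hne h0
  · intro ha
    exact absurd (Finset.mem_range.mpr (by omega)) ha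

lemma coeff_f_pow {k : Type*} [CommRing k] {f : MvPolynomial (Fin 2) k}
    (h0 : coeff 0 f = 0) (hX : coeff (Finsupp.single 0 1) f = 1)
    (hY : coeff (Finsupp.single 1 1) f = 1) (n a b : ℕ) (hab : a + b = n) :
    coeff (Finsupp.single 0 a + Finsupp.single 1 b) (f ^ n) = (n.choose a : k) := by
  set Dm : Fin 2 →₀ ℕ := Finsupp.single 0 a + Finsupp.single 1 b with hDm
  have ha0 : Dm 0 = a := by simp [hDm]
  have ha1 : Dm 1 = b := by simp [hDm]
  set g := f - X 0 - X 1 with hg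
  have hXY1 : ∀ x : Fin 2 →₀ ℕ, x 0 + x 1 < 1 →
      coeff x (X 0 + X 1 : MvPolynomial (Fin 2) k) = 0 := by
    intro x hx
    have hx0 : x = 0 := by
      rw [fin2_decomp x]
      have : x 0 = 0 := by omega
      have : x 1 = 0 := by omega
      simp_all
    subst hx0
    simp [coeff_add, coeff_X']
  have hgv : ∀ x : Fin 2 →₀ ℕ, x 0 + x 1 < 2 → coeff x g = 0 := by
    intro x hx
    have hcases : (x 0 = 0 ∧ x 1 = 0) ∨ (x 0 = 1 ∧ x 1 = 0) ∨ (x 0 = 0 ∧ x 1 = 1) := by omega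
    have hxd := fin2_decomp x
    rcases hcases with ⟨u, v⟩ | ⟨u, v⟩ | ⟨u, v⟩ <;>
      rw [u, v] at hxd <;> simp only [Finsupp.single_zero, add_zero, zero_add] at hxd <;>
      subst hxd <;>
      simp [hg, coeff_sub, coeff_X', h0, hX, hY, Finsupp.single_eq_single_iff]
  have hfeq : f = (X 0 + X 1) + g := by ring
  rw [hfeq, add_pow, coeff_sum, Finset.sum_eq_single n]
  · rw [Nat.sub_self, pow_zero, mul_one, Nat.choose_self, Nat.cast_one, mul_one,
      coeff_addXY_pow n a b hab]
  · intro j hj hne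
    have hj' : j < n := lt_of_le_of_ne (Nat.lt_succ_iff.mp (Finset.mem_range.mp hj)) hne
    rw [hcastC, mul_comm, coeff_C_mul]
    rw [mul_vanish (pow_vanish hXY1 j) (pow_vanish hgv (n - j))
      Dm (by rw [ha0, ha1]; omega), mul_zero]
  · intro hn
    exact absurd (Finset.mem_range.mpr (by omega)) hn

lemma choose_pow_mod (p : ℕ) (hp : p.Prime) :
    ∀ (v n : ℕ), p ^ v ∣ n → n.choose (p ^ v) % p = (n / p ^ v) % p := by
  haveI : Fact p.Prime := ⟨hp⟩
  intro v
  induction v with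
  | zero => intro n _; simp
  | succ v IH =>
    intro n hdvd
    have hpn : p ∣ n := dvd_trans (dvd_pow_self p (Nat.succ_ne_zero v)) hdvd
    have step : n.choose (p ^ (v+1)) % p
        = ((n % p).choose (p ^ (v+1) % p) * (n / p).choose (p ^ (v+1) / p)) % p :=
      Choose.choose_modEq_choose_mod_mul_choose_div_nat
    have h1 : n % p = 0 := Nat.dvd_iff_mod_eq_zero.mp hpn
    have h2 : p ^ (v + 1) % p = 0 := by rw [pow_succ]; exact Nat.mul_mod_left _ _
    have h3 : p ^ (v + 1) / p = p ^ v := by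
      rw [pow_succ, Nat.mul_div_cancel _ hp.pos]
    rw [h1, h2, h3, Nat.choose_zero_right, one_mul] at step
    have hdvd' : p ^ v ∣ n / p := by
      rw [Nat.dvd_div_iff_mul_dvd hpn, mul_comm, ← pow_succ]
      exact hdvd
    rw [step, IH (n / p) hdvd', Nat.div_div_eq_div_mul, ← pow_succ']

/-- `f ∈ k[X,Y]` is an `m`-truncated group law over `k` (for the prime `p`):
all monomials of `f` have both exponents `< p ^ m`, `f(X,0) = X`, `f(0,Y) = Y`, and
`f(f(X,Y),Z) ≡ f(X,f(Y,Z))` modulo the ideal `(X^{p^m}, Y^{p^m}, Z^{p^m})`. -/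
def IsTruncGroupLaw (p m : ℕ) {k : Type*} [Field k] (f : MvPolynomial (Fin 2) k) : Prop :=
  (∀ d ∈ f.support, d 0 < p ^ m ∧ d 1 < p ^ m) ∧
  (MvPolynomial.aeval ![(Polynomial.X : Polynomial k), 0] f = Polynomial.X) ∧
  (MvPolynomial.aeval ![0, (Polynomial.X : Polynomial k)] f = Polynomial.X) ∧
  (MvPolynomial.aeval
      ![MvPolynomial.aeval ![(MvPolynomial.X 0 : MvPolynomial (Fin 3) k), MvPolynomial.X 1] f,
        MvPolynomial.X 2] f -
    MvPolynomial.aeval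
      ![(MvPolynomial.X 0 : MvPolynomial (Fin 3) k),
        MvPolynomial.aeval ![(MvPolynomial.X 1 : MvPolynomial (Fin 3) k), MvPolynomial.X 2] f] f
    ∈ Ideal.span {(MvPolynomial.X 0 : MvPolynomial (Fin 3) k) ^ p ^ m,
        MvPolynomial.X 1 ^ p ^ m, MvPolynomial.X 2 ^ p ^ m})

/-- `D` is an `m`-truncated HS-derivation on `R` (for the prime `p`):
only the maps `D n` for `n < p ^ m` are relevant. -/
def IsTruncHSDeriv (p m : ℕ) {R : Type*} [CommRing R] (D : ℕ → R → R) : Prop :=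
  (∀ n, n < p ^ m → ∀ x y, D n (x + y) = D n x + D n y) ∧
  (∀ x, D 0 x = x) ∧
  (∀ n, n < p ^ m → ∀ x y, D n (x * y) = ∑ ij ∈ Finset.HasAntidiagonal.antidiagonal n, D ij.1 x * D ij.2 y)

/-- `D` is an `f`-iterative `m`-truncated HS-derivation (an `f`-derivation):
`D j ∘ D i = Σ_{n < p^m} c_{i,j,n} • D n` where `c_{i,j,n}` is the coefficient of
`X^i Y^j` in `f ^ n`. -/
def IsFIterativeTrunc (p m : ℕ) {k : Type*} [Field k] (f : MvPolynomial (Fin 2) k)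
    {R : Type*} [CommRing R] [Algebra k R] (D : ℕ → R → R) : Prop :=
  ∀ i j : ℕ, i < p ^ m → j < p ^ m → ∀ r,
    D j (D i r) = ∑ n ∈ Finset.range (p ^ m),
      MvPolynomial.coeff (Finsupp.single (0 : Fin 2) i + Finsupp.single (1 : Fin 2) j) (f ^ n)
        • D n r


/-- Two `f`-derivations agreeing on all `p`-th power indices `p^j`, `j < m`, are equal. -/
theorem f_deriv_eq_of_eq_on_p_powers (p : ℕ) (hp : p.Prime) (m : ℕ) (hm : 0 < m)
    (k : Type*) [Field k] [CharP k p]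
    (f : MvPolynomial (Fin 2) k) (hf : IsTruncGroupLaw p m f)
    (R : Type*) [CommRing R] [Algebra k R]
    (d d' : ℕ → R → R)
    (hd : IsTruncHSDeriv p m d) (hd' : IsTruncHSDeriv p m d')
    (hiter : IsFIterativeTrunc p m f d) (hiter' : IsFIterativeTrunc p m f d')
    (heq : ∀ j, j < m → d (p ^ j) = d' (p ^ j)) :
    ∀ n, n < p ^ m → d n = d' n := by
  classical
  obtain ⟨hsupp, hX0eq, h0Yeq, -⟩ := hf
  have hc0 : coeff (0 : Fin 2 →₀ ℕ) f = 0 := by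
    have h := coeff_of_aevalX0 hX0eq 0
    rw [Finsupp.single_zero] at h
    simpa using h
  have hcX : coeff (Finsupp.single 0 1) f = 1 := by simpa using coeff_of_aevalX0 hX0eq 1
  have hcY : coeff (Finsupp.single 1 1) f = 1 := by simpa using coeff_of_aeval0X h0Yeq 1
  have hdeg1 : ∀ x : Fin 2 →₀ ℕ, x 0 + x 1 < 1 → coeff x f = 0 := by
    intro x hx
    have hx0 : x = 0 := by
      rw [fin2_decomp x, show x 0 = 0 from by omega, show x 1 = 0 from by omega]
      simp
    rw [hx0]
    exact hc0
  have fvanish : ∀ ℓ : ℕ, ∀ dd : Fin 2 →₀ ℕ, dd 0 + dd 1 < ℓ → coeff dd (f ^ ℓ) = 0 := by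
    intro ℓ dd h
    exact pow_vanish hdeg1 ℓ dd (by omega)
  intro n
  induction n using Nat.strong_induction_on with
  | _ n IH =>
    intro hn
    rcases eq_or_ne n 0 with rfl | hn0
    · funext r
      rw [hd.2.1, hd'.2.1]
    by_cases hppow : ∃ j, n = p ^ j
    · obtain ⟨j, rfl⟩ := hppow
      have hj : j < m := by
        by_contra hjm
        push_neg at hjm
        have : p ^ m ≤ p ^ j := Nat.pow_le_pow_right hp.pos hjm
        omega
      exact heq j hj
    · -- n ≥ 2 and not a p-power
      set v := n.factorization p with hv
      set a := p ^ v with ha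
      have hadvd : a ∣ n := Nat.ordProj_dvd n p
      have hnc : ¬ p ∣ (n / a) := Nat.not_dvd_ordCompl hp hn0
      have ha_ne : a ≠ n := fun h => hppow ⟨v, h.symm⟩
      have ha_pos : 0 < a := Nat.pow_pos hp.pos
      have ha_lt : a < n := lt_of_le_of_ne (Nat.le_of_dvd (by omega) hadvd) ha_ne
      set b := n - a with hb
      have hb_pos : 0 < b := by omega
      have hb_lt : b < n := by omega
      have haq : a < p ^ m := by omega
      have hbq : b < p ^ m := by omega
      have hvm : v < m := (Nat.pow_lt_pow_iff_right hp.one_lt).mp haq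
      -- the binomial coefficient is nonzero mod p
      have hchb : ¬ p ∣ n.choose b := by
        rw [show n.choose b = n.choose a from by
          rw [hb, Nat.choose_symm (le_of_lt ha_lt)]]
        intro hdv
        have h1 : n.choose a % p = (n / a) % p := choose_pow_mod p hp v n hadvd
        have h2 : n.choose a % p = 0 := Nat.dvd_iff_mod_eq_zero.mp hdv
        exact hnc (Nat.dvd_iff_mod_eq_zero.mpr (by omega))
      have hCne : ((n.choose b : ℕ) : k) ≠ 0 := by
        rw [Ne, CharP.cast_eq_zero_iff k p]
        exact hchb
      set Dm : Fin 2 →₀ ℕ := Finsupp.single 0 b + Finsupp.single 1 a with hDm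
      have hD0 : Dm 0 = b := by simp [hDm]
      have hD1 : Dm 1 = a := by simp [hDm]
      set c : ℕ → k := fun ℓ => coeff Dm (f ^ ℓ) with hc
      have hcn : c n = (n.choose b : k) := by
        rw [hc]
        exact coeff_f_pow hc0 hcX hcY n b a (by omega)
      have hsum : ∀ (e : ℕ → R → R) (r : R),
          (∑ ℓ ∈ Finset.range (p ^ m), c ℓ • e ℓ r)
            = c n • e n r + ∑ ℓ ∈ Finset.range n, c ℓ • e ℓ r := by
        intro e r
        have hstep : ∑ ℓ ∈ Finset.range (p ^ m), c ℓ • e ℓ r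
            = ∑ ℓ ∈ Finset.range (n + 1), c ℓ • e ℓ r := by
          symm
          apply Finset.sum_subset (Finset.range_subset_range.mpr (by omega))
          intro ℓ hℓ hℓn
          rw [Finset.mem_range] at hℓ hℓn
          have : c ℓ = 0 := fvanish ℓ Dm (by rw [hD0, hD1]; omega)
          rw [this, zero_smul]
        rw [hstep, Finset.sum_range_succ, add_comm]
      funext r
      have e1 := hiter b a hbq haq r
      have e2 := hiter' b a hbq haq r
      rw [show (Finsupp.single (0 : Fin 2) b + Finsupp.single (1 : Fin 2) a) = Dm from rfl] at e1 e2
      have hL : d a (d b r) = d' a (d' b r) := by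
        rw [IH b hb_lt hbq, heq v hvm]
      have key : c n • d n r + ∑ ℓ ∈ Finset.range n, c ℓ • d ℓ r
          = c n • d' n r + ∑ ℓ ∈ Finset.range n, c ℓ • d' ℓ r := by
        rw [← hsum d r, ← hsum d' r, ← e1, ← e2, hL]
      have htail : ∑ ℓ ∈ Finset.range n, c ℓ • d ℓ r
          = ∑ ℓ ∈ Finset.range n, c ℓ • d' ℓ r := by
        apply Finset.sum_congr rfl
        intro ℓ hℓ
        rw [Finset.mem_range] at hℓ
        rw [IH ℓ hℓ (by omega)]
      rw [htail] at key
      have hcancel : c n • d n r = c n • d' n r := by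
        exact add_right_cancel key
      have := congrArg (fun x => (c n)⁻¹ • x) hcancel
      simpa [smul_smul, inv_mul_cancel₀ (show c n ≠ 0 from by rw [hcn]; exact hCne)] using this
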